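/- For every vertex x of G and every natural number t, the sum of the coordinates s_t(x)(z) over all vertices z with d(x,z) ≡ t (mod 2) equals the Fibonacci number f(2t+2). -/

import Mathlib

open scoped Classical

/-- `Φ⁻ₓ`: apply the reflection at every vertex at odd distance from `x`. -/
noncomputable def phiOdd {V : Type*} (G : SimpleGraph V) (x : V) (a : V → ℤ) : V → ℤ :=
  fun z => if Odd (G.dist x z) then -a z + ∑ᶠ w ∈ G.neighborSet z, a w else a z

/-- `Φ⁺ₓ`: apply the reflection at every vertex at even distance from `x`. -/
noncomputable def phiEven {V : Type*} (G : SimpleGraph V) (x : V) (a : V → ℤ) : V → ℤ :=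
  fun z => if Even (G.dist x z) then -a z + ∑ᶠ w ∈ G.neighborSet z, a w else a z

/-- The Fibonacci vectors `s_t(x)`: `s_0(x) = δ_x`, `s_{t+1}(x) = Φ⁻ₓ s_t(x)` for even `t`
and `s_{t+1}(x) = Φ⁺ₓ s_t(x)` for odd `t`. -/
noncomputable def sVec {V : Type*} (G : SimpleGraph V) (x : V) : ℕ → V → ℤ
  | 0 => fun z => if z = x then 1 else 0
  | t + 1 => if Even t then phiOdd G x (sVec G x t) else phiEven G x (sVec G x t)

/-- The Fibonacci vectors `r_t(x,y)`: `r_0(x,y) = δ_x + δ_y`, `r_{t+1}(x,y) = Φ⁻ₓ r_t(x,y)`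
for even `t` and `r_{t+1}(x,y) = Φ⁺ₓ r_t(x,y)` for odd `t`. -/
noncomputable def rVec {V : Type*} (G : SimpleGraph V) (x y : V) : ℕ → V → ℤ
  | 0 => fun z => (if z = x then 1 else 0) + (if z = y then 1 else 0)
  | t + 1 => if Even t then phiOdd G x (rVec G x y t) else phiEven G x (rVec G x y t)

section FibAux

variable {V : Type*} {G : SimpleGraph V}

lemma nbrFin (hreg : ∀ v : V, (G.neighborSet v).ncard = 3) (v : V) :
    (G.neighborSet v).Finite := by
  by_contra h
  have h2 := Set.Infinite.ncard h
  rw [hreg v] at h2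
  exact three_ne_zero h2

lemma treePathLen (hconn : G.Connected) (hacyc : G.IsAcyclic) {u v : V}
    (p : G.Walk u v) (hp : p.IsPath) : p.length = G.dist u v := by
  obtain ⟨q, hq, hql⟩ := hconn.exists_path_of_dist u v
  have h := (SimpleGraph.isAcyclic_iff_path_unique.mp hacyc) ⟨p, hp⟩ ⟨q, hq⟩
  have h2 : p = q := congrArg Subtype.val h
  rw [h2, hql]

lemma adjDist (hconn : G.Connected) (hacyc : G.IsAcyclic) (x : V) {z w : V}
    (h : G.Adj z w) :
    G.dist x w = G.dist x z + 1 ∨ G.dist x z = G.dist x w + 1 := by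
  obtain ⟨p, hp, hpl⟩ := hconn.exists_path_of_dist x z
  by_cases hw : w ∈ p.support
  · right
    have hq := hp.takeUntil hw
    have hr := hp.dropUntil hw
    have huniq := (SimpleGraph.isAcyclic_iff_path_unique.mp hacyc)
      ⟨p.dropUntil w hw, hr⟩ (SimpleGraph.Path.singleton h.symm)
    have hlen1 : (p.dropUntil w hw).length = 1 := by
      have h3 : p.dropUntil w hw = (SimpleGraph.Path.singleton h.symm : G.Path w z).val :=
        congrArg Subtype.val huniq
      rw [h3]
      simp [SimpleGraph.Path.singleton]
    have hsplit : (p.takeUntil w hw).length + (p.dropUntil w hw).length = p.length := by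
      rw [← SimpleGraph.Walk.length_append, SimpleGraph.Walk.take_spec]
    have hdw := treePathLen hconn hacyc _ hq
    omega
  · left
    have hq : ((SimpleGraph.Walk.cons h.symm p.reverse).reverse : G.Walk x w).IsPath := by
      apply SimpleGraph.Walk.IsPath.reverse
      exact hp.reverse.cons (by simpa using hw)
    have h5 := treePathLen hconn hacyc _ hq
    simp only [SimpleGraph.Walk.length_reverse, SimpleGraph.Walk.length_cons,
      SimpleGraph.Walk.length_reverse] at h5
    omega

lemma adjMod (hconn : G.Connected) (hacyc : G.IsAcyclic) (x : V) {z w : V}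
    (h : G.Adj z w) : G.dist x z % 2 ≠ G.dist x w % 2 := by
  rcases adjDist hconn hacyc x h with h' | h' <;> omega

lemma finsumFilter {h : V → ℤ} {T : Finset V} (hT : Function.support h ⊆ ↑T) (S : Set V) :
    ∑ᶠ z ∈ S, h z = ∑ z ∈ T.filter (· ∈ S), h z := by
  apply finsum_mem_eq_sum_of_inter_support_eq
  ext z
  simp only [Set.mem_inter_iff, Function.mem_support, Finset.coe_filter, Set.mem_setOf_eq]
  constructor
  · rintro ⟨hz, hz2⟩; exact ⟨⟨hT hz2, hz⟩, hz2⟩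
  · rintro ⟨⟨_, hz⟩, hz2⟩; exact ⟨hz, hz2⟩

/-- support of the neighbour-sum function -/
lemma nbrSum_support (hreg : ∀ v : V, (G.neighborSet v).ncard = 3) (a : V → ℤ)
    (ha : (Function.support a).Finite) :
    Function.support (fun z => ∑ᶠ w ∈ G.neighborSet z, a w) ⊆
      ↑(ha.toFinset.biUnion (fun v => (nbrFin hreg v).toFinset)) := by
  intro z hz
  simp only [Function.mem_support] at hz
  have hex : ∃ w ∈ G.neighborSet z, a w ≠ 0 := by
    by_contra hc
    push_neg at hc
    exact hz (finsum_mem_of_eqOn_zero hc)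
  obtain ⟨w, hw1, hw2⟩ := hex
  simp only [Finset.coe_biUnion, Set.mem_iUnion, Finset.mem_coe, Finset.mem_biUnion]
  exact ⟨w, by simpa [Set.Finite.mem_toFinset] using hw2,
    by simpa [Set.Finite.mem_toFinset, SimpleGraph.mem_neighborSet] using hw1.symm⟩

lemma sum_nbr (hreg : ∀ v : V, (G.neighborSet v).ncard = 3)
    (a : V → ℤ) (ha : (Function.support a).Finite)
    (p : V → Prop) (hp : ∀ {z w : V}, G.Adj z w → (p z ↔ ¬ p w)) :
    ∑ᶠ z ∈ {z : V | ¬ p z}, (∑ᶠ w ∈ G.neighborSet z, a w)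
      = 3 * ∑ᶠ z ∈ {z : V | p z}, a z := by
  classical
  set s : Finset V := ha.toFinset with hs
  set TN : Finset V := s.biUnion (fun v => (nbrFin hreg v).toFinset) with hTN
  have hmem_s : ∀ z, z ∈ s ↔ a z ≠ 0 := by
    intro z; simp [hs, Set.Finite.mem_toFinset]
  have hmem_TN : ∀ z, z ∈ TN ↔ ∃ w, a w ≠ 0 ∧ G.Adj w z := by
    intro z
    rw [hTN, Finset.mem_biUnion]
    constructor
    · rintro ⟨w, hw1, hw2⟩
      exact ⟨w, (hmem_s w).mp hw1, by simpa [Set.Finite.mem_toFinset] using hw2⟩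
    · rintro ⟨w, hw1, hw2⟩
      exact ⟨w, (hmem_s w).mpr hw1, by simpa [Set.Finite.mem_toFinset] using hw2⟩
  have hsub : Function.support a ⊆ ↑s := by
    intro z hz
    simpa [hmem_s] using hz
  rw [finsumFilter hsub, finsumFilter (nbrSum_support hreg a ha)]
  rw [Finset.sum_filter, Finset.sum_filter]
  simp only [Set.mem_setOf_eq]
  have hinner : ∀ z, (∑ᶠ w ∈ G.neighborSet z, a w)
      = ∑ w ∈ s, if G.Adj z w then a w else 0 := by
    intro z
    rw [finsum_mem_eq_finite_toFinset_sum _ (nbrFin hreg z), ← Finset.sum_filter]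
    have hset : s.filter (fun w => G.Adj z w) = (nbrFin hreg z).toFinset ∩ s := by
      ext w
      simp only [Finset.mem_filter, Finset.mem_inter, Set.Finite.mem_toFinset,
        SimpleGraph.mem_neighborSet]
      tauto
    rw [hset]
    refine (Finset.sum_subset Finset.inter_subset_left ?_).symm
    intro w hw hw2
    by_contra hc
    exact hw2 (Finset.mem_inter.mpr ⟨hw, (hmem_s w).mpr hc⟩)
  simp only [hinner]
  have hpush : ∀ z : V, (if ¬ p z then ∑ w ∈ s, (if G.Adj z w then a w else 0) else 0)
      = ∑ w ∈ s, (if ¬ p z ∧ G.Adj z w then a w else 0) := by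
    intro z
    by_cases hz : p z
    · simp [hz]
    · simp only [hz, not_false_iff, if_true, true_and]
  simp only [hpush]
  rw [Finset.sum_comm, Finset.mul_sum]
  refine Finset.sum_congr rfl (fun w hw => ?_)
  rw [← Finset.sum_filter]
  by_cases hpw : p w
  · have hcard : TN.filter (fun z => ¬ p z ∧ G.Adj z w) = (nbrFin hreg w).toFinset := by
      ext z
      simp only [Finset.mem_filter, Set.Finite.mem_toFinset, SimpleGraph.mem_neighborSet]
      constructor
      · rintro ⟨_, _, hzw⟩; exact hzw.symm
      · intro hwz
        refine ⟨(hmem_TN z).mpr ⟨w, (hmem_s w).mp hw, hwz⟩, ?_, hwz.symm⟩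
        intro hpz
        exact (hp hwz.symm).mp hpz hpw
    rw [hcard, Finset.sum_const]
    have h3 : (nbrFin hreg w).toFinset.card = 3 := by
      rw [← Set.ncard_eq_toFinset_card (G.neighborSet w) (nbrFin hreg w)]
      exact hreg w
    rw [h3, if_pos hpw]
    ring
  · have hempty : TN.filter (fun z => ¬ p z ∧ G.Adj z w) = ∅ := by
      ext z
      simp only [Finset.mem_filter, Finset.notMem_empty, iff_false, not_and]
      intro _ hpz hzw
      exact hpz ((hp hzw).mpr hpw)
    rw [hempty, if_neg hpw, Finset.sum_empty]
    ring

lemma support_flip_fin (hreg : ∀ v : V, (G.neighborSet v).ncard = 3)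
    (a b : V → ℤ) (ha : (Function.support a).Finite)
    (hb : ∀ z, b z = a z ∨ b z = -a z + ∑ᶠ w ∈ G.neighborSet z, a w) :
    (Function.support b).Finite := by
  refine Set.Finite.subset
    (Set.Finite.union (Finset.finite_toSet ha.toFinset)
      (Finset.finite_toSet (ha.toFinset.biUnion (fun v => (nbrFin hreg v).toFinset)))) ?_
  intro z hz
  rw [Function.mem_support] at hz
  rcases hb z with h' | h'
  · left
    rw [Set.Finite.coe_toFinset]
    rw [h'] at hz
    exact hz
  · rw [h'] at hz
    by_cases hza : a z = 0
    · right
      have hgz : (∑ᶠ w ∈ G.neighborSet z, a w) ≠ 0 := by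
        intro hc
        rw [hza, hc] at hz
        simp at hz
      exact nbrSum_support hreg a ha hgz
    · left
      rw [Set.Finite.coe_toFinset]
      exact hza

lemma flip_sums (hreg : ∀ v : V, (G.neighborSet v).ncard = 3)
    (a b : V → ℤ) (ha : (Function.support a).Finite)
    (p : V → Prop) (hp : ∀ {z w : V}, G.Adj z w → (p z ↔ ¬ p w))
    (hb1 : ∀ z, ¬ p z → b z = -a z + ∑ᶠ w ∈ G.neighborSet z, a w)
    (hb2 : ∀ z, p z → b z = a z) :
    (∑ᶠ z ∈ {z : V | ¬ p z}, b z
        = 3 * (∑ᶠ z ∈ {z : V | p z}, a z) - ∑ᶠ z ∈ {z : V | ¬ p z}, a z)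
    ∧ ∑ᶠ z ∈ {z : V | p z}, b z = ∑ᶠ z ∈ {z : V | p z}, a z := by
  constructor
  · have hcongr : ∑ᶠ z ∈ {z : V | ¬ p z}, b z
        = ∑ᶠ z ∈ {z : V | ¬ p z}, (-a z + ∑ᶠ w ∈ G.neighborSet z, a w) :=
      finsum_mem_congr rfl (fun z hz => hb1 z hz)
    rw [hcongr, ← sum_nbr hreg a ha p hp]
    set T : Finset V := ha.toFinset ∪ ha.toFinset.biUnion (fun v => (nbrFin hreg v).toFinset)
      with hT
    have hsa : Function.support a ⊆ ↑T := by
      intro z hz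
      rw [hT, Finset.coe_union]
      left
      rw [Set.Finite.coe_toFinset]
      exact hz
    have hsg : Function.support (fun z => ∑ᶠ w ∈ G.neighborSet z, a w) ⊆ ↑T := by
      intro z hz
      rw [hT, Finset.coe_union]
      right
      exact nbrSum_support hreg a ha hz
    have hsc : Function.support (fun z => -a z + ∑ᶠ w ∈ G.neighborSet z, a w) ⊆ ↑T := by
      intro z hz
      rw [Function.mem_support] at hz
      by_cases hza : a z = 0
      · apply hsg
        rw [Function.mem_support]
        intro hc
        rw [hza, hc] at hz
        simp at hz
      · exact hsa hza
    rw [finsumFilter hsc, finsumFilter hsg, finsumFilter hsa, ← Finset.sum_sub_distrib]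
    refine Finset.sum_congr rfl (fun z _ => by ring)
  · exact finsum_mem_congr rfl (fun z hz => hb2 z hz)

lemma sVec_support_fin (hreg : ∀ v : V, (G.neighborSet v).ncard = 3) (x : V) (t : ℕ) :
    (Function.support (sVec G x t)).Finite := by
  induction t with
  | zero =>
      refine Set.Finite.subset (Set.finite_singleton x) ?_
      intro z hz
      rw [Function.mem_support] at hz
      simp only [sVec] at hz
      by_cases h : z = x
      · simp [h]
      · rw [if_neg h] at hz
        exact absurd rfl hz
  | succ t ih =>
      refine support_flip_fin hreg (sVec G x t) (sVec G x (t + 1)) ih ?_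
      intro z
      rw [show sVec G x (t + 1)
          = (if Even t then phiOdd G x (sVec G x t) else phiEven G x (sVec G x t)) from rfl]
      by_cases ht : Even t
      · rw [if_pos ht]
        simp only [phiOdd]
        by_cases hz : Odd (G.dist x z)
        · right; rw [if_pos hz]
        · left; rw [if_neg hz]
      · rw [if_neg ht]
        simp only [phiEven]
        by_cases hz : Even (G.dist x z)
        · right; rw [if_pos hz]
        · left; rw [if_neg hz]

end FibAux

/-- The sum of the coordinates `s_t(x)(z)` over all vertices `z` with
`d(x,z) ≡ t (mod 2)` equals the Fibonacci number `f (2t+2)`, where `f` is the extended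
Fibonacci sequence. -/
theorem sVec_sum_eq_parity (f : ℤ → ℤ) (h0 : f 0 = 0) (h1 : f 1 = 1)
    (hrec : ∀ n : ℤ, f (n + 1) = f n + f (n - 1))
    (V : Type*) (G : SimpleGraph V) (hconn : G.Connected)
    (hacyc : G.IsAcyclic) (hreg : ∀ v : V, (G.neighborSet v).ncard = 3)
    (x : V) (t : ℕ) :
    ∑ᶠ z ∈ {z : V | G.dist x z % 2 = t % 2}, sVec G x t z = f (2 * t + 2) := by
  classical
  -- Fibonacci arithmetic
  have h2 : ∀ n : ℤ, f (n + 2) = f (n + 1) + f n := by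
    intro n
    have h := hrec (n + 1)
    rw [show n + 1 - 1 = n by ring] at h
    rw [show n + 1 + 1 = n + 2 by ring] at h
    exact h
  have hstep : ∀ n : ℤ, f (n + 4) = 3 * f (n + 2) - f n := by
    intro n
    have a1 := h2 n
    have a2 := h2 (n + 1)
    rw [show n + 1 + 2 = n + 3 by ring, show n + 1 + 1 = n + 2 by ring] at a2
    have a3 := h2 (n + 2)
    rw [show n + 2 + 2 = n + 4 by ring, show n + 2 + 1 = n + 3 by ring] at a3
    linarith
  have hf2 : f 2 = 1 := by
    have h := h2 0
    norm_num at h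
    rw [h, h0, h1]
    ring
  -- parity of adjacent vertices
  have hpE : ∀ {z w : V}, G.Adj z w → (Even (G.dist x z) ↔ ¬ Even (G.dist x w)) := by
    intro z w h
    have := adjMod hconn hacyc x h
    rw [Nat.even_iff, Nat.even_iff]
    omega
  have hpO : ∀ {z w : V}, G.Adj z w → (Odd (G.dist x z) ↔ ¬ Odd (G.dist x w)) := by
    intro z w h
    have := adjMod hconn hacyc x h
    rw [Nat.odd_iff, Nat.odd_iff]
    omega
  have hsetO : {z : V | Odd (G.dist x z)} = {z : V | ¬ Even (G.dist x z)} := by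
    ext z
    rw [Set.mem_setOf_eq, Set.mem_setOf_eq, Nat.not_even_iff_odd]
  have hsetE : {z : V | Even (G.dist x z)} = {z : V | ¬ Odd (G.dist x z)} := by
    ext z
    rw [Set.mem_setOf_eq, Set.mem_setOf_eq, Nat.not_odd_iff_even]
  -- the main induction
  have key : ∀ t : ℕ,
      (Even t → (∑ᶠ z ∈ {z : V | Even (G.dist x z)}, sVec G x t z = f (2 * (t : ℤ) + 2)
        ∧ ∑ᶠ z ∈ {z : V | Odd (G.dist x z)}, sVec G x t z = f (2 * (t : ℤ))))
      ∧ (¬ Even t → (∑ᶠ z ∈ {z : V | Even (G.dist x z)}, sVec G x t z = f (2 * (t : ℤ))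
        ∧ ∑ᶠ z ∈ {z : V | Odd (G.dist x z)}, sVec G x t z = f (2 * (t : ℤ) + 2))) := by
    intro t
    induction t with
    | zero =>
        constructor
        · intro _
          have hsupp : Function.support (sVec G x 0) ⊆ ↑({x} : Finset V) := by
            intro z hz
            rw [Function.mem_support] at hz
            simp only [sVec] at hz
            by_contra hc
            rw [if_neg (by simpa using hc)] at hz
            exact hz rfl
          constructor
          · rw [finsumFilter hsupp, Finset.sum_filter, Finset.sum_singleton,
              if_pos (by simp [SimpleGraph.dist_self] : x ∈ {z : V | Even (G.dist x z)})]
            simp only [sVec, if_pos rfl]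
            norm_num [hf2]
          · rw [finsumFilter hsupp, Finset.sum_filter, Finset.sum_singleton,
              if_neg (by simp [SimpleGraph.dist_self] : ¬ x ∈ {z : V | Odd (G.dist x z)})]
            norm_num [h0]
        · intro h
          exact absurd Even.zero h
    | succ t ih =>
        have hc1 : (2 * ((t + 1 : ℕ) : ℤ)) = 2 * (t : ℤ) + 2 := by push_cast; ring
        have hc2 : (2 * ((t + 1 : ℕ) : ℤ) + 2) = 2 * (t : ℤ) + 4 := by push_cast; ring
        by_cases ht : Even t
        · -- step with phiOdd, flipped class is Odd
          obtain ⟨hA, hB⟩ := ih.1 ht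
          have hb1 : ∀ z, ¬ Even (G.dist x z) →
              sVec G x (t + 1) z = -(sVec G x t z) + ∑ᶠ w ∈ G.neighborSet z, sVec G x t w := by
            intro z hz
            show (if Even t then phiOdd G x (sVec G x t) else phiEven G x (sVec G x t)) z = _
            rw [if_pos ht]
            simp only [phiOdd]
            rw [if_pos (Nat.not_even_iff_odd.mp hz)]
          have hb2 : ∀ z, Even (G.dist x z) → sVec G x (t + 1) z = sVec G x t z := by
            intro z hz
            show (if Even t then phiOdd G x (sVec G x t) else phiEven G x (sVec G x t)) z = _
            rw [if_pos ht]
            simp only [phiOdd]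
            rw [if_neg (by rw [← Nat.not_even_iff_odd]; exact not_not_intro hz)]
          have hfl := flip_sums hreg (sVec G x t) (sVec G x (t + 1))
            (sVec_support_fin hreg x t) (fun z => Even (G.dist x z)) hpE hb1 hb2
          have hOddNew : ∑ᶠ z ∈ {z : V | Odd (G.dist x z)}, sVec G x (t + 1) z
              = 3 * (∑ᶠ z ∈ {z : V | Even (G.dist x z)}, sVec G x t z)
                - ∑ᶠ z ∈ {z : V | Odd (G.dist x z)}, sVec G x t z := by
            rw [hsetO]
            exact hfl.1
          have hEvenNew : ∑ᶠ z ∈ {z : V | Even (G.dist x z)}, sVec G x (t + 1) z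
              = ∑ᶠ z ∈ {z : V | Even (G.dist x z)}, sVec G x t z := hfl.2
          constructor
          · intro h
            exact absurd h (by simp [Nat.even_add_one, ht])
          · intro _
            constructor
            · rw [hEvenNew, hA, hc1]
            · rw [hOddNew, hA, hB, hc2]
              have := hstep (2 * (t : ℤ))
              linarith
        · -- step with phiEven, flipped class is Even
          obtain ⟨hA, hB⟩ := ih.2 ht
          have hb1 : ∀ z, ¬ Odd (G.dist x z) →
              sVec G x (t + 1) z = -(sVec G x t z) + ∑ᶠ w ∈ G.neighborSet z, sVec G x t w := by
            intro z hz
            show (if Even t then phiOdd G x (sVec G x t) else phiEven G x (sVec G x t)) z = _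
            rw [if_neg ht]
            simp only [phiEven]
            rw [if_pos (Nat.not_odd_iff_even.mp hz)]
          have hb2 : ∀ z, Odd (G.dist x z) → sVec G x (t + 1) z = sVec G x t z := by
            intro z hz
            show (if Even t then phiOdd G x (sVec G x t) else phiEven G x (sVec G x t)) z = _
            rw [if_neg ht]
            simp only [phiEven]
            rw [if_neg (by rw [← Nat.not_odd_iff_even]; exact not_not_intro hz)]
          have hfl := flip_sums hreg (sVec G x t) (sVec G x (t + 1))
            (sVec_support_fin hreg x t) (fun z => Odd (G.dist x z)) hpO hb1 hb2
          have hEvenNew : ∑ᶠ z ∈ {z : V | Even (G.dist x z)}, sVec G x (t + 1) z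
              = 3 * (∑ᶠ z ∈ {z : V | Odd (G.dist x z)}, sVec G x t z)
                - ∑ᶠ z ∈ {z : V | Even (G.dist x z)}, sVec G x t z := by
            rw [hsetE]
            exact hfl.1
          have hOddNew : ∑ᶠ z ∈ {z : V | Odd (G.dist x z)}, sVec G x (t + 1) z
              = ∑ᶠ z ∈ {z : V | Odd (G.dist x z)}, sVec G x t z := hfl.2
          constructor
          · intro _
            constructor
            · rw [hEvenNew, hA, hB, hc2]
              have := hstep (2 * (t : ℤ))
              linarith
            · rw [hOddNew, hB, hc1]
          · intro h
            exact absurd (Nat.even_add_one.mpr ht) h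
  rcases Nat.even_or_odd t with ht | ht
  · have hm : t % 2 = 0 := Nat.even_iff.mp ht
    have hset : {z : V | G.dist x z % 2 = t % 2} = {z : V | Even (G.dist x z)} := by
      ext z
      simp [Nat.even_iff, hm]
    rw [hset]
    exact ((key t).1 ht).1
  · have hm : t % 2 = 1 := Nat.odd_iff.mp ht
    have hset : {z : V | G.dist x z % 2 = t % 2} = {z : V | Odd (G.dist x z)} := by
      ext z
      simp [Nat.odd_iff, hm]
    rw [hset]
    exact ((key t).2 (Nat.not_even_iff_odd.mpr ht)).2
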